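/- Let A be a real n×n matrix, P a symmetric positive definite real n×n matrix, 0 ≤ ρ < 1 with Aᵀ P A ⪯ ρ·P, let 0 < δ ≤ 1/2 and D ≥ 0. Let (x_k)_{k≥1} and (d_k)_{k≥1} be sequences in ℝⁿ with x_1 = 0, x_{k+1} = A x_k + d_k for all k ≥ 1, and ‖d_k‖ ≤ D·log(k/δ) for all k ≥ 1. Then for every k ≥ 1, ‖x_k‖ ≤ √(λ_max(P)/λ_min(P)) · (D / (1 − ρ^{1/2})) · log(k/δ), where λ_max(P) and λ_min(P) denote the largest and smallest eigenvalues of P. -/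

import Mathlib

open Matrix

/-- The Euclidean (2-)norm of a vector in `ℝⁿ`. -/
noncomputable def eNorm {n : ℕ} (v : Fin n → ℝ) : ℝ := Real.sqrt (∑ j, v j ^ 2)

open scoped MatrixOrder

section Aux

variable {n : ℕ}

lemma eNorm_nonneg' (v : Fin n → ℝ) : 0 ≤ eNorm v := Real.sqrt_nonneg _

lemma eNorm_sq' (v : Fin n → ℝ) : eNorm v ^ 2 = ∑ j, v j ^ 2 :=
  Real.sq_sqrt (by positivity)

lemma eNorm_eq' (v : Fin n → ℝ) : eNorm v = ‖(WithLp.equiv 2 (Fin n → ℝ)).symm v‖ := by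
  rw [EuclideanSpace.norm_eq]
  simp [eNorm, sq_abs, Real.norm_eq_abs]

lemma eNorm_add_le' (u v : Fin n → ℝ) : eNorm (u + v) ≤ eNorm u + eNorm v := by
  rw [eNorm_eq', eNorm_eq', eNorm_eq']
  exact (norm_add_le _ _ : ‖(WithLp.equiv 2 (Fin n → ℝ)).symm u + (WithLp.equiv 2 (Fin n → ℝ)).symm v‖ ≤ _)

lemma eNorm_zero' : eNorm (0 : Fin n → ℝ) = 0 := by simp [eNorm]

lemma dot_mulVec_left' (M : Matrix (Fin n) (Fin n) ℝ) (u w : Fin n → ℝ) :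
    u ⬝ᵥ M *ᵥ w = (Mᵀ *ᵥ u) ⬝ᵥ w := by
  rw [dotProduct_mulVec, ← mulVec_transpose]

lemma quad_decomp' (P : Matrix (Fin n) (Fin n) ℝ) (hH : P.IsHermitian) (v : Fin n → ℝ) :
    v ⬝ᵥ P *ᵥ v = ∑ i, hH.eigenvalues i *
      ((star (hH.eigenvectorUnitary : Matrix (Fin n) (Fin n) ℝ) *ᵥ v) i) ^ 2 := by
  set U : Matrix (Fin n) (Fin n) ℝ := (hH.eigenvectorUnitary : Matrix (Fin n) (Fin n) ℝ) with hU
  set w : Fin n → ℝ := star U *ᵥ v with hw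
  conv_lhs => rw [hH.spectral_theorem, Unitary.conjStarAlgAut_apply]
  rw [RCLike.ofReal_real_eq_id]
  have h1 : (U * diagonal (id ∘ hH.eigenvalues) * star U) *ᵥ v
      = U *ᵥ (diagonal (hH.eigenvalues) *ᵥ w) := by
    simp [← mulVec_mulVec, hw, Function.comp]
  rw [h1, dotProduct_mulVec]
  have h2 : v ᵥ* U = w := by
    rw [hw, Matrix.star_eq_conjTranspose, conjTranspose_eq_transpose_of_trivial,
      mulVec_transpose]
  rw [h2]
  simp only [dotProduct, mulVec_diagonal]
  exact Finset.sum_congr rfl fun i _ => by ring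

lemma quad_norm' (P : Matrix (Fin n) (Fin n) ℝ) (hH : P.IsHermitian) (v : Fin n → ℝ) :
    ∑ i, ((star (hH.eigenvectorUnitary : Matrix (Fin n) (Fin n) ℝ) *ᵥ v) i) ^ 2
      = ∑ i, v i ^ 2 := by
  set U : Matrix (Fin n) (Fin n) ℝ := (hH.eigenvectorUnitary : Matrix (Fin n) (Fin n) ℝ) with hU
  set w : Fin n → ℝ := star U *ᵥ v with hw
  have h0 : ∑ i, w i ^ 2 = w ⬝ᵥ w := by simp [dotProduct, sq]
  have h1 : ∑ i, v i ^ 2 = v ⬝ᵥ v := by simp [dotProduct, sq]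
  rw [h0, h1, hw, dotProduct_mulVec]
  have h2 : (star U *ᵥ v) ᵥ* star U = (U * star U) *ᵥ v := by
    rw [Matrix.star_eq_conjTranspose, conjTranspose_eq_transpose_of_trivial,
      ← mulVec_transpose, transpose_transpose, mulVec_mulVec]
  rw [h2, mem_unitaryGroup_iff.mp hH.eigenvectorUnitary.2, one_mulVec]

end Aux

/-- If `P ≻ 0`, `Aᵀ P A ⪯ ρ P` with `0 ≤ ρ < 1`, `0 < δ ≤ 1/2`, `D ≥ 0`, and the sequence
`x` satisfies `x 1 = 0`, `x (k+1) = A x k + d k` with `‖d k‖ ≤ D log(k/δ)` for `k ≥ 1`, then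
for every `k ≥ 1`, `‖x k‖ ≤ √(λ_max(P)/λ_min(P)) · D/(1 - ρ^{1/2}) · log(k/δ)`. -/
theorem stmt_11 {n : ℕ} (hn : 0 < n)
    (A P : Matrix (Fin n) (Fin n) ℝ) (hP : P.PosDef)
    (ρ : ℝ) (hρ0 : 0 ≤ ρ) (hρ1 : ρ < 1)
    (hA : (ρ • P - Aᵀ * P * A).PosSemidef)
    (δ D : ℝ) (hδ0 : 0 < δ) (hδ1 : δ ≤ 1 / 2) (hD : 0 ≤ D)
    (x d : ℕ → Fin n → ℝ) (hx1 : x 1 = 0)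
    (hxk : ∀ k : ℕ, 1 ≤ k → x (k + 1) = A.mulVec (x k) + d k)
    (hd : ∀ k : ℕ, 1 ≤ k → eNorm (d k) ≤ D * Real.log (k / δ)) :
    ∀ k : ℕ, 1 ≤ k → eNorm (x k) ≤
      Real.sqrt ((⨆ i, hP.1.eigenvalues i) / (⨅ i, hP.1.eigenvalues i)) *
        (D / (1 - Real.sqrt ρ)) * Real.log (k / δ) := by
  classical
  have hne : Nonempty (Fin n) := Fin.pos_iff_nonempty.mp hn
  set lmax : ℝ := ⨆ i, hP.1.eigenvalues i with hlmaxdef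
  set lmin : ℝ := ⨅ i, hP.1.eigenvalues i with hlmindef
  have hev_pos : ∀ i, 0 < hP.1.eigenvalues i := hP.eigenvalues_pos
  have hlmin_pos : 0 < lmin := by
    obtain ⟨i, hi⟩ := Finite.exists_min hP.1.eigenvalues
    exact lt_of_lt_of_le (hev_pos i) (le_ciInf hi)
  have hlmin_le : ∀ i, lmin ≤ hP.1.eigenvalues i := fun i =>
    ciInf_le (Set.Finite.bddBelow (Set.finite_range _)) i
  have hle_lmax : ∀ i, hP.1.eigenvalues i ≤ lmax := fun i =>
    le_ciSup (Set.Finite.bddAbove (Set.finite_range _)) i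
  have hlmax_pos : 0 < lmax :=
    lt_of_lt_of_le (hev_pos (Classical.arbitrary _)) (hle_lmax _)
  -- quadratic form bounds
  have hquad_le : ∀ v : Fin n → ℝ, v ⬝ᵥ P *ᵥ v ≤ lmax * ∑ j, v j ^ 2 := by
    intro v
    rw [quad_decomp' P hP.1 v, ← quad_norm' P hP.1 v, Finset.mul_sum]
    exact Finset.sum_le_sum fun i _ =>
      mul_le_mul_of_nonneg_right (hle_lmax i) (sq_nonneg _)
  have hquad_ge : ∀ v : Fin n → ℝ, lmin * ∑ j, v j ^ 2 ≤ v ⬝ᵥ P *ᵥ v := by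
    intro v
    rw [quad_decomp' P hP.1 v, ← quad_norm' P hP.1 v, Finset.mul_sum]
    exact Finset.sum_le_sum fun i _ =>
      mul_le_mul_of_nonneg_right (hlmin_le i) (sq_nonneg _)
  -- the P-seminorm via the square root of P
  set S : Matrix (Fin n) (Fin n) ℝ := CFC.sqrt P with hSdef
  have hSherm : S.IsHermitian := (CFC.sqrt_nonneg P).posSemidef.1
  have hST : Sᵀ = S := hSherm
  have hg_sq : ∀ v : Fin n → ℝ, eNorm (S *ᵥ v) ^ 2 = v ⬝ᵥ P *ᵥ v := by
    intro v
    rw [eNorm_sq']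
    have h0 : ∑ j, (S *ᵥ v) j ^ 2 = (S *ᵥ v) ⬝ᵥ (S *ᵥ v) := by simp [dotProduct, sq]
    rw [h0]
    conv_rhs => rw [← CFC.sqrt_mul_sqrt_self P hP.posSemidef.nonneg, ← hSdef, ← mulVec_mulVec,
      dot_mulVec_left' S v (S *ᵥ v), hST]
  -- comparison between the P-seminorm and eNorm
  have hg_le : ∀ v : Fin n → ℝ, eNorm (S *ᵥ v) ≤ Real.sqrt lmax * eNorm v := by
    intro v
    have h2 : 0 ≤ Real.sqrt lmax * eNorm v :=
      mul_nonneg (Real.sqrt_nonneg _) (eNorm_nonneg' _)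
    have h1 : eNorm (S *ᵥ v) ^ 2 ≤ (Real.sqrt lmax * eNorm v) ^ 2 := by
      rw [mul_pow, Real.sq_sqrt hlmax_pos.le, hg_sq, eNorm_sq']
      exact hquad_le v
    calc eNorm (S *ᵥ v) = Real.sqrt (eNorm (S *ᵥ v) ^ 2) :=
        (Real.sqrt_sq (eNorm_nonneg' _)).symm
      _ ≤ Real.sqrt ((Real.sqrt lmax * eNorm v) ^ 2) := Real.sqrt_le_sqrt h1
      _ = Real.sqrt lmax * eNorm v := Real.sqrt_sq h2
  have hg_ge : ∀ v : Fin n → ℝ, Real.sqrt lmin * eNorm v ≤ eNorm (S *ᵥ v) := by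
    intro v
    have h2 : 0 ≤ Real.sqrt lmin * eNorm v :=
      mul_nonneg (Real.sqrt_nonneg _) (eNorm_nonneg' _)
    have h1 : (Real.sqrt lmin * eNorm v) ^ 2 ≤ eNorm (S *ᵥ v) ^ 2 := by
      rw [mul_pow, Real.sq_sqrt hlmin_pos.le, hg_sq, eNorm_sq']
      exact hquad_ge v
    calc Real.sqrt lmin * eNorm v = Real.sqrt ((Real.sqrt lmin * eNorm v) ^ 2) :=
        (Real.sqrt_sq h2).symm
      _ ≤ Real.sqrt (eNorm (S *ᵥ v) ^ 2) := Real.sqrt_le_sqrt h1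
      _ = eNorm (S *ᵥ v) := Real.sqrt_sq (eNorm_nonneg' _)
  -- contraction
  have hg_contract : ∀ v : Fin n → ℝ,
      eNorm (S *ᵥ (A *ᵥ v)) ≤ Real.sqrt ρ * eNorm (S *ᵥ v) := by
    intro v
    have key : (A *ᵥ v) ⬝ᵥ P *ᵥ (A *ᵥ v) ≤ ρ * (v ⬝ᵥ P *ᵥ v) := by
      have h := hA.dotProduct_mulVec_nonneg v
      have hsv : star v = v := by simp
      rw [hsv, sub_mulVec, smul_mulVec, dotProduct_sub, dotProduct_smul,
        smul_eq_mul, sub_nonneg] at h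
      have h3 : v ⬝ᵥ (Aᵀ * P * A) *ᵥ v = (A *ᵥ v) ⬝ᵥ P *ᵥ (A *ᵥ v) := by
        rw [← mulVec_mulVec, ← mulVec_mulVec, dot_mulVec_left' Aᵀ v, transpose_transpose]
      rw [h3] at h
      exact h
    have h2 : 0 ≤ Real.sqrt ρ * eNorm (S *ᵥ v) :=
      mul_nonneg (Real.sqrt_nonneg _) (eNorm_nonneg' _)
    have h1 : eNorm (S *ᵥ (A *ᵥ v)) ^ 2 ≤ (Real.sqrt ρ * eNorm (S *ᵥ v)) ^ 2 := by
      rw [mul_pow, Real.sq_sqrt hρ0, hg_sq, hg_sq]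
      exact key
    calc eNorm (S *ᵥ (A *ᵥ v)) = Real.sqrt (eNorm (S *ᵥ (A *ᵥ v)) ^ 2) :=
        (Real.sqrt_sq (eNorm_nonneg' _)).symm
      _ ≤ Real.sqrt ((Real.sqrt ρ * eNorm (S *ᵥ v)) ^ 2) := Real.sqrt_le_sqrt h1
      _ = Real.sqrt ρ * eNorm (S *ᵥ v) := Real.sqrt_sq h2
  -- basic quantities
  have hsρ1 : Real.sqrt ρ < 1 := by
    rw [show (1:ℝ) = Real.sqrt 1 by simp]
    exact Real.sqrt_lt_sqrt hρ0 hρ1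
  have hsρ0 : 0 ≤ Real.sqrt ρ := Real.sqrt_nonneg _
  have hden : 0 < 1 - Real.sqrt ρ := by linarith
  set C : ℝ := Real.sqrt lmax * (D / (1 - Real.sqrt ρ)) with hCdef
  have hC0 : 0 ≤ C := by positivity
  have hlog_nonneg : ∀ k : ℕ, 1 ≤ k → 0 ≤ Real.log (k / δ) := by
    intro k hk
    apply Real.log_nonneg
    rw [le_div_iff₀ hδ0]
    have : (1:ℝ) ≤ (k:ℝ) := by exact_mod_cast hk
    linarith
  have hlog_mono : ∀ k : ℕ, 1 ≤ k → Real.log (k / δ) ≤ Real.log ((k+1 : ℕ) / δ) := by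
    intro k hk
    have hkk : (k:ℝ) ≤ ((k+1:ℕ):ℝ) := by exact_mod_cast Nat.le_succ k
    apply Real.log_le_log (by positivity)
    gcongr
  -- main induction
  have main : ∀ k : ℕ, 1 ≤ k → eNorm (S *ᵥ x k) ≤ C * Real.log (k / δ) := by
    intro k hk
    induction k with
    | zero => omega
    | succ m ih =>
      rcases Nat.eq_or_lt_of_le hk with h1 | h1
      · -- m + 1 = 1
        have hm : m = 0 := by omega
        subst hm
        rw [hx1, mulVec_zero, eNorm_zero']
        have : ((0:ℕ)+1 : ℕ) = (1:ℕ) := rfl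
        exact mul_nonneg hC0 (by simpa using hlog_nonneg 1 le_rfl)
      · have hm : 1 ≤ m := by omega
        have ihm := ih hm
        rw [hxk m hm, mulVec_add]
        calc eNorm (S *ᵥ A *ᵥ x m + S *ᵥ d m)
            ≤ eNorm (S *ᵥ (A *ᵥ x m)) + eNorm (S *ᵥ d m) := eNorm_add_le' _ _
          _ ≤ Real.sqrt ρ * eNorm (S *ᵥ x m) + Real.sqrt lmax * eNorm (d m) :=
              add_le_add (hg_contract _) (hg_le _)
          _ ≤ Real.sqrt ρ * (C * Real.log (m / δ)) +
              Real.sqrt lmax * (D * Real.log (m / δ)) := by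
              apply add_le_add
              · exact mul_le_mul_of_nonneg_left ihm hsρ0
              · exact mul_le_mul_of_nonneg_left (hd m hm) (Real.sqrt_nonneg _)
          _ = C * Real.log (m / δ) := by
              rw [hCdef]; field_simp; ring
          _ ≤ C * Real.log ((m+1 : ℕ) / δ) :=
              mul_le_mul_of_nonneg_left (hlog_mono m hm) hC0
  -- conclude
  intro k hk
  have h1 : Real.sqrt lmin * eNorm (x k) ≤ C * Real.log (k / δ) :=
    le_trans (hg_ge _) (main k hk)
  have hslmin : 0 < Real.sqrt lmin := Real.sqrt_pos.mpr hlmin_pos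
  have h2 : eNorm (x k) ≤ C / Real.sqrt lmin * Real.log (k / δ) := by
    rw [div_mul_eq_mul_div, le_div_iff₀ hslmin]
    linarith [h1]
  refine h2.trans (le_of_eq ?_)
  rw [hCdef, Real.sqrt_div hlmax_pos.le]
  ring
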